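/- Associated Legendre derivative recurrence (the identity sinθ ∂_θ Y_l^m = l Q_{l+1} Y_{l+1}^m − (l+1) Q_l Y_{l−1}^m in unnormalized form): define the Legendre polynomial by Rodrigues' formula P_l(x) = (1/(2^l l!)) · (d/dx)^l (x² − 1)^l and the associated Legendre function by P_l^m(x) = (1 − x²)^{m/2} · (d/dx)^m P_l(x). Then for all integers l ≥ 1 and 0 ≤ m ≤ l, and all x ∈ (−1, 1), (2l+1)(1 − x²) · (d/dx) P_l^m(x) = (l+1)(l+m) P_{l−1}^m(x) − l(l − m + 1) P_{l+1}^m(x). -/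

import Mathlib

noncomputable section

/-- The Legendre polynomial, via Rodrigues' formula
`P_l(x) = (1/(2^l l!)) (d/dx)^l (x² − 1)^l`. -/
def legendreP (l : ℕ) (x : ℝ) : ℝ :=
  (1 / (2 ^ l * (Nat.factorial l : ℝ))) *
    iteratedDeriv l (fun t : ℝ => (t ^ 2 - 1) ^ l) x

/-- The associated Legendre function
`P_l^m(x) = (1 − x²)^{m/2} (d/dx)^m P_l(x)` for `x ∈ (−1,1)`. -/
def assocLegendreP (l m : ℕ) (x : ℝ) : ℝ :=
  (1 - x ^ 2) ^ ((m : ℝ) / 2) * iteratedDeriv m (legendreP l) x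

open Polynomial

namespace ALAux

def U (l : ℕ) : ℝ[X] := (X ^ 2 - 1) ^ l

def Rp (l : ℕ) : ℝ[X] :=
  C (1 / (2 ^ l * (Nat.factorial l : ℝ))) * derivative^[l] (U l)

lemma DD (n : ℕ) (p : ℝ[X]) : derivative (derivative^[n] p) = derivative^[n + 1] p :=
  (Function.iterate_succ_apply' _ _ _).symm

lemma c_succ (l : ℕ) :
    (1 / (2 ^ (l + 1) * ((Nat.factorial (l + 1)) : ℝ))) * (2 * (l : ℝ) + 2)
      = 1 / (2 ^ l * ((Nat.factorial l) : ℝ)) := by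
  have h1 : ((Nat.factorial (l + 1)) : ℝ) = ((l : ℝ) + 1) * (Nat.factorial l : ℝ) := by
    rw [Nat.factorial_succ]; push_cast; ring
  have h2 : (Nat.factorial l : ℝ) ≠ 0 := Nat.cast_ne_zero.2 (Nat.factorial_ne_zero l)
  have h3 : ((l : ℝ) + 1) ≠ 0 := by positivity
  have h4 : (2 : ℝ) ^ l ≠ 0 := by positivity
  rw [h1]
  field_simp
  ring

lemma Cconv (l : ℕ) : C (2 * (l : ℝ) + 2) = 2 * (l : ℝ[X]) + 2 := by
  simp [map_add, map_mul, map_ofNat]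

lemma hc (l : ℕ) :
    C (1 / (2 ^ (l + 1) * ((Nat.factorial (l + 1)) : ℝ))) * (2 * (l : ℝ[X]) + 2)
      = C (1 / (2 ^ l * ((Nat.factorial l) : ℝ))) := by
  rw [← Cconv, ← C_mul, c_succ]

lemma iterD_X_mul (n : ℕ) (p : ℝ[X]) :
    derivative^[n + 1] (X * p)
      = X * derivative^[n + 1] p + ((n : ℝ[X]) + 1) * derivative^[n] p := by
  induction n generalizing p with
  | zero => simp [derivative_mul]; ring
  | succ n ih =>
    rw [Function.iterate_succ_apply, derivative_mul, derivative_X, one_mul,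
      iterate_map_add derivative (n + 1), ih (derivative p),
      ← Function.iterate_succ_apply derivative, ← Function.iterate_succ_apply derivative]
    simp only [Nat.succ_eq_add_one]
    push_cast
    ring_nf

lemma derivative_U (l : ℕ) :
    derivative (U (l + 1)) = C (2 * (l : ℝ) + 2) * (X * U l) := by
  rw [U, derivative_pow_succ, U]
  simp only [derivative_sub, derivative_one, derivative_X_pow, sub_zero,
    map_add, map_mul, map_one, map_ofNat, C_eq_natCast]
  push_cast
  ring

lemma U_succ (l : ℕ) : U (l + 1) = (X ^ 2 - 1) * U l := by
  rw [U, U, pow_succ]; ring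

lemma derivative_Rp (l : ℕ) :
    derivative (Rp l) = C (1 / (2 ^ l * ((Nat.factorial l) : ℝ))) * derivative^[l + 1] (U l) := by
  rw [Rp, derivative_C_mul, DD]

/-- `P_{l+1}' = X P_l' + (l+1) P_l`. -/
lemma lemA (l : ℕ) :
    derivative (Rp (l + 1)) = X * derivative (Rp l) + ((l : ℝ[X]) + 1) * Rp l := by
  have h1 : derivative^[l + 2] (U (l + 1))
      = (2 * (l : ℝ[X]) + 2) * (X * derivative^[l + 1] (U l)
          + ((l : ℝ[X]) + 1) * derivative^[l] (U l)) := by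
    rw [show l + 2 = (l + 1) + 1 from rfl, Function.iterate_succ_apply, derivative_U,
      iterate_derivative_C_mul, iterD_X_mul, Cconv]
  rw [derivative_Rp (l + 1), derivative_Rp l, Rp, h1]
  linear_combination
    (X * derivative^[l + 1] (U l) + ((l : ℝ[X]) + 1) * derivative^[l] (U l)) * hc l

/-- `X P_{l+1}' = (l+1) P_{l+1} + P_l'`. -/
lemma lemB (l : ℕ) :
    X * derivative (Rp (l + 1)) = ((l : ℝ[X]) + 1) * Rp (l + 1) + derivative (Rp l) := by
  have key : derivative^[l + 1] (X * derivative (U (l + 1)))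
      = derivative^[l + 1] (C (2 * (l : ℝ) + 2) * (U (l + 1) + U l)) := by
    congr 1
    rw [derivative_U, U_succ]
    ring
  have lhs : derivative^[l + 1] (X * derivative (U (l + 1)))
      = X * derivative^[l + 2] (U (l + 1)) + ((l : ℝ[X]) + 1) * derivative^[l + 1] (U (l + 1)) := by
    rw [iterD_X_mul l (derivative (U (l + 1))),
      ← Function.iterate_succ_apply derivative, ← Function.iterate_succ_apply derivative]
  have rhs : derivative^[l + 1] (C (2 * (l : ℝ) + 2) * (U (l + 1) + U l))
      = (2 * (l : ℝ[X]) + 2) * (derivative^[l + 1] (U (l + 1)) + derivative^[l + 1] (U l)) := by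
    rw [iterate_derivative_C_mul, iterate_map_add derivative (l + 1), Cconv]
  rw [lhs, rhs] at key
  rw [derivative_Rp (l + 1), derivative_Rp l, Rp]
  linear_combination C (1 / (2 ^ (l + 1) * ((Nat.factorial (l + 1)) : ℝ))) * key
    + (derivative^[l + 1] (U l)) * hc l

lemma E2 (l : ℕ) :
    (X ^ 2 - 1) * derivative (Rp l)
      = ((l : ℝ[X]) + 1) * (Rp (l + 1) - X * Rp l) := by
  linear_combination (norm := (push_cast; ring1)) lemB l - X * lemA l

lemma E1 (l : ℕ) :
    (X ^ 2 - 1) * derivative (Rp (l + 1))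
      = ((l : ℝ[X]) + 1) * (X * Rp (l + 1) - Rp l) := by
  linear_combination (norm := (push_cast; ring1)) (X ^ 2 - 1) * lemA l + X * E2 l

lemma E3 (l : ℕ) :
    (2 * (l : ℝ[X]) + 3) * (X * Rp (l + 1))
      = ((l : ℝ[X]) + 2) * Rp (l + 2) + ((l : ℝ[X]) + 1) * Rp l := by
  linear_combination (norm := (push_cast; ring1)) E2 (l + 1) - E1 l

lemma base0 (l : ℕ) :
    (2 * (l : ℝ[X]) + 3) * ((1 - X ^ 2) * derivative (Rp (l + 1)))
      = ((l : ℝ[X]) + 2) * (((l : ℝ[X]) + 1) * (Rp l - Rp (l + 2))) := by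
  linear_combination (norm := (push_cast; ring1))
    (-(2 * (l : ℝ[X]) + 3)) * E1 l - ((l : ℝ[X]) + 1) * E3 l

lemma dagger0 (l : ℕ) :
    (2 * (l : ℝ[X]) + 3) * (X * derivative (Rp (l + 1)))
      = ((l : ℝ[X]) + 2) * derivative (Rp l) + ((l : ℝ[X]) + 1) * derivative (Rp (l + 2)) := by
  linear_combination (norm := (push_cast; ring1))
    ((l : ℝ[X]) + 2) * lemB l - ((l : ℝ[X]) + 1) * lemA (l + 1)

lemma iterD_X_mul' (m : ℕ) (q : ℝ[X]) :
    derivative^[m] (X * derivative q)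
      = X * derivative^[m + 1] q + (m : ℝ[X]) * derivative^[m] q := by
  cases m with
  | zero => simp
  | succ m =>
    rw [iterD_X_mul m (derivative q), ← Function.iterate_succ_apply derivative,
      ← Function.iterate_succ_apply derivative]
    push_cast
    ring

lemma cast_C (r : ℝ) (n : ℕ) (h : (n : ℝ) = r) : ((n : ℝ[X])) = C r := by
  rw [← h, C_eq_natCast]

lemma iterD_cast_mul (m : ℕ) (a : ℝ[X]) (r : ℝ) (h : a = C r) (p : ℝ[X]) :
    derivative^[m] (a * p) = a * derivative^[m] p := by
  rw [h, iterate_derivative_C_mul]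

lemma cast23 (l : ℕ) : (2 * (l : ℝ[X]) + 3) = C (2 * (l : ℝ) + 3) := by
  simp [map_add, map_mul, map_ofNat, C_eq_natCast]

lemma cast2 (l : ℕ) : ((l : ℝ[X]) + 2) = C ((l : ℝ) + 2) := by
  simp [map_add, map_mul, map_ofNat, C_eq_natCast]

lemma cast1 (l : ℕ) : ((l : ℝ[X]) + 1) = C ((l : ℝ) + 1) := by
  simp [map_add, map_mul, map_ofNat, C_eq_natCast]

lemma daggerm (l m : ℕ) :
    (2 * (l : ℝ[X]) + 3) * (X * derivative^[m + 1] (Rp (l + 1))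
        + (m : ℝ[X]) * derivative^[m] (Rp (l + 1)))
      = ((l : ℝ[X]) + 2) * derivative^[m + 1] (Rp l)
        + ((l : ℝ[X]) + 1) * derivative^[m + 1] (Rp (l + 2)) := by
  have h := congrArg (derivative^[m]) (dagger0 l)
  rw [iterD_cast_mul m _ _ (cast23 l), iterD_X_mul', iterate_map_add derivative m,
    iterD_cast_mul m _ _ (cast2 l), iterD_cast_mul m _ _ (cast1 l),
    ← Function.iterate_succ_apply derivative, ← Function.iterate_succ_apply derivative] at h
  simpa [Nat.succ_eq_add_one] using h

lemma starm (l m : ℕ) :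
    (2 * (l : ℝ[X]) + 3) * ((1 - X ^ 2) * derivative^[m + 1] (Rp (l + 1))
        - (m : ℝ[X]) * X * derivative^[m] (Rp (l + 1)))
      = ((l : ℝ[X]) + 2) * ((l : ℝ[X]) + 1 + (m : ℝ[X])) * derivative^[m] (Rp l)
        - ((l : ℝ[X]) + 1) * ((l : ℝ[X]) + 2 - (m : ℝ[X])) * derivative^[m] (Rp (l + 2)) := by
  induction m with
  | zero =>
    simp only [zero_add, Function.iterate_one, Function.iterate_zero, id_eq]
    linear_combination (norm := (push_cast; ring1)) base0 l
  | succ m ih =>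
    have hd := congrArg derivative ih
    simp only [derivative_mul, derivative_sub, derivative_add, derivative_one,
      derivative_X, derivative_X_pow, derivative_natCast, derivative_ofNat, C_eq_natCast,
      DD] at hd
    linear_combination (norm := (push_cast; ring1)) hd + daggerm l m

lemma iterD_eval (p : ℝ[X]) (n : ℕ) :
    iteratedDeriv n (fun x : ℝ => p.eval x) = fun x => (derivative^[n] p).eval x := by
  induction n with
  | zero => simp
  | succ n ih =>
    rw [iteratedDeriv_succ, ih]
    funext x
    rw [Polynomial.deriv, DD]

lemma legendreP_eq (l : ℕ) : legendreP l = fun x => (Rp l).eval x := by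
  funext x
  have h : (fun t : ℝ => (t ^ 2 - 1) ^ l) = fun t => (U l).eval t := by
    funext t; simp [U]
  rw [legendreP, h, iterD_eval]
  simp [Rp]

lemma iterD_legendre (l m : ℕ) (x : ℝ) :
    iteratedDeriv m (legendreP l) x = (derivative^[m] (Rp l)).eval x := by
  rw [legendreP_eq, iterD_eval]

lemma star_eval (l m : ℕ) (x : ℝ) :
    (2 * (l : ℝ) + 3) * ((1 - x ^ 2) * (derivative^[m + 1] (Rp (l + 1))).eval x
        - (m : ℝ) * x * (derivative^[m] (Rp (l + 1))).eval x)
      = ((l : ℝ) + 2) * ((l : ℝ) + 1 + (m : ℝ)) * (derivative^[m] (Rp l)).eval x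
        - ((l : ℝ) + 1) * ((l : ℝ) + 2 - (m : ℝ)) * (derivative^[m] (Rp (l + 2))).eval x := by
  have h := congrArg (Polynomial.eval x) (starm l m)
  simpa [eval_mul, eval_add, eval_sub, eval_pow, eval_one, eval_X, eval_natCast] using h

end ALAux

/-- Associated Legendre derivative recurrence (the identity
`sinθ ∂_θ Y_l^m = l Q_{l+1} Y_{l+1}^m − (l+1) Q_l Y_{l−1}^m` in
unnormalized form): for all integers `l ≥ 1`, `0 ≤ m ≤ l` and all
`x ∈ (−1,1)`,
`(2l+1)(1−x²) (d/dx)P_l^m(x) = (l+1)(l+m) P_{l−1}^m(x) − l(l−m+1) P_{l+1}^m(x)`. -/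
theorem assocLegendre_derivative_recurrence (l m : ℕ) (hl : 1 ≤ l)
    (hm : m ≤ l) :
    ∀ x ∈ Set.Ioo (-1 : ℝ) 1,
      (2 * (l : ℝ) + 1) * (1 - x ^ 2) * deriv (assocLegendreP l m) x
        = ((l : ℝ) + 1) * ((l : ℝ) + (m : ℝ)) * assocLegendreP (l - 1) m x
          - (l : ℝ) * ((l : ℝ) - (m : ℝ) + 1) * assocLegendreP (l + 1) m x := by
  obtain ⟨k, rfl⟩ : ∃ k, l = k + 1 := ⟨l - 1, (Nat.succ_pred_eq_of_pos hl).symm⟩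
  intro x hx
  obtain ⟨hx1, hx2⟩ := hx
  have hA : (0 : ℝ) < 1 - x ^ 2 := by nlinarith
  have hgd : HasDerivAt (fun y : ℝ => (derivative^[m] (ALAux.Rp (k + 1))).eval y)
      ((derivative^[m + 1] (ALAux.Rp (k + 1))).eval x) x := by
    simpa [ALAux.DD] using (derivative^[m] (ALAux.Rp (k + 1))).hasDerivAt x
  have h0 : HasDerivAt (fun y : ℝ => 1 - y ^ 2) (-(2 * x)) x := by
    simpa using (hasDerivAt_pow 2 x).const_sub 1
  have hr : HasDerivAt (fun y : ℝ => (1 - y ^ 2) ^ ((m : ℝ) / 2))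
      (((m : ℝ) / 2) * (1 - x ^ 2) ^ ((m : ℝ) / 2 - 1) * (-(2 * x))) x := by
    have := h0.rpow_const (p := (m : ℝ) / 2) (Or.inl hA.ne')
    convert this using 1
    ring
  have hfun : assocLegendreP (k + 1) m
      = fun y => (1 - y ^ 2) ^ ((m : ℝ) / 2) * (derivative^[m] (ALAux.Rp (k + 1))).eval y := by
    funext y
    rw [assocLegendreP, ALAux.iterD_legendre]
  have hder : deriv (assocLegendreP (k + 1) m) x
      = ((m : ℝ) / 2) * (1 - x ^ 2) ^ ((m : ℝ) / 2 - 1) * (-(2 * x))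
            * (derivative^[m] (ALAux.Rp (k + 1))).eval x
        + (1 - x ^ 2) ^ ((m : ℝ) / 2) * (derivative^[m + 1] (ALAux.Rp (k + 1))).eval x := by
    rw [hfun]
    exact (hr.mul hgd).deriv
  have hL1 : assocLegendreP (k + 1 - 1) m x
      = (1 - x ^ 2) ^ ((m : ℝ) / 2) * (derivative^[m] (ALAux.Rp k)).eval x := by
    rw [show k + 1 - 1 = k from rfl, assocLegendreP, ALAux.iterD_legendre]
  have hL2 : assocLegendreP (k + 1 + 1) m x
      = (1 - x ^ 2) ^ ((m : ℝ) / 2) * (derivative^[m] (ALAux.Rp (k + 2))).eval x := by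
    rw [show k + 1 + 1 = k + 2 from rfl, assocLegendreP, ALAux.iterD_legendre]
  have hAe : (1 - x ^ 2) * (1 - x ^ 2) ^ ((m : ℝ) / 2 - 1) = (1 - x ^ 2) ^ ((m : ℝ) / 2) := by
    rw [Real.rpow_sub hA, Real.rpow_one]
    field_simp
  have hstar := ALAux.star_eval k m x
  rw [hder, hL1, hL2]
  push_cast
  linear_combination (1 - x ^ 2) ^ ((m : ℝ) / 2) * hstar
    + (-(2 * (k : ℝ) + 3) * (m : ℝ) * x * (derivative^[m] (ALAux.Rp (k + 1))).eval x) * hAe
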